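/- Let S₀ be a dominant string and let B be a nonempty proper suffix of S₀ of even length. Then for every m ≥ 1 the concatenation S₀^m B (m copies of S₀ followed by B) is a dominant string. -/

import Mathlib

open Filter Set
open scoped Classical

noncomputable section

/-- The Gauss map `G(x) = 1/x - ⌊1/x⌋` for `x ≠ 0`, `G(0) = 0`. -/
def gaussMap (x : ℝ) : ℝ := if x = 0 then 0 else 1 / x - ⌊1 / x⌋

/-- The value of the finite continued fraction `[0; a₁, …, aₙ]`. -/
def cfVal : List ℕ+ → ℝ
  | [] => 0
  | a :: l => 1 / ((a : ℝ) + cfVal l)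

/-- The value of the infinite continued fraction `[0; a₁, a₂, …]`
(the limit of the convergents). -/
def cfValInf (a : ℕ → ℕ+) : ℝ :=
  limUnder atTop (fun n => cfVal (List.ofFn fun i : Fin n => a i))

/-- The purely periodic sequence repeating the string `S`. -/
def perSeq (S : List ℕ+) : ℕ → ℕ+ := fun n => S.getD (n % S.length) 1

/-- `[0; overline{S}]`. -/
def cfPer (S : List ℕ+) : ℝ := cfValInf (perSeq S)

/-- The eventually periodic sequence starting with `T` and then repeating `S`. -/
def preperSeq (T S : List ℕ+) : ℕ → ℕ+ :=
  fun n => if n < T.length then T.getD n 1 else S.getD ((n - T.length) % S.length) 1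

/-- The continued fraction expansion of `r` of even length (when it exists). -/
def evenExp (r : ℝ) : List ℕ+ :=
  if h : ∃ S : List ℕ+, S ≠ [] ∧ Even S.length ∧ cfVal S = r then h.choose else []

/-- The continued fraction expansion of `r` of odd length (when it exists). -/
def oddExp (r : ℝ) : List ℕ+ :=
  if h : ∃ S : List ℕ+, S ≠ [] ∧ Odd S.length ∧ cfVal S = r then h.choose else []

/-- The golden ratio `g = (√5 - 1)/2`. -/
def gGolden : ℝ := (Real.sqrt 5 - 1) / 2

/-- The quadratic interval `I_r = ([0; overline{S₁}], [0; overline{S₀}])`. -/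
def quadInt (r : ℝ) : Set ℝ := Set.Ioo (cfPer (oddExp r)) (cfPer (evenExp r))

/-- The bifurcation (exceptional) set `E = [0,g] \ ⋃_{r ∈ ℚ ∩ (0,1)} I_r`. -/
def ESet : Set ℝ :=
  Set.Icc 0 gGolden \
    ⋃ r ∈ {x : ℝ | x ∈ Set.Ioo (0 : ℝ) 1 ∧ ∃ q : ℚ, (q : ℝ) = x}, quadInt r

/-- `Q_E`: the set of rationals `r ∈ (0,1)` whose quadratic interval `I_r` is maximal,
i.e. is a connected component of `[0,g] \ E`. -/
def QE : Set ℝ :=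
  {r | r ∈ Set.Ioo (0 : ℝ) 1 ∧ (∃ q : ℚ, (q : ℝ) = r) ∧
    ∃ x ∈ quadInt r, connectedComponentIn (Set.Icc 0 gGolden \ ESet) x = quadInt r}

/-- `ω(r) = [0; S₁ overline{S₀}]`. -/
def omegaPt (r : ℝ) : ℝ := cfValInf (preperSeq (oddExp r) (evenExp r))

/-- The tuning window `W_r = [ω(r), α₀)`. -/
def Wwin (r : ℝ) : Set ℝ := Set.Ico (omegaPt r) (cfPer (evenExp r))

/-- The `(n+1)`-st continued fraction digit of `x`: `a_{n+1} = ⌊1/G^n(x)⌋`. -/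
def cfDigit (x : ℝ) (n : ℕ) : ℕ+ := (⌊1 / (gaussMap^[n] x)⌋).toNat.toPNat'

/-- Concatenation of the first `n` blocks of a sequence of strings. -/
def blocksCat (B : ℕ → List ℕ+) : ℕ → List ℕ+
  | 0 => []
  | n + 1 => blocksCat B n ++ B n

/-- The infinite string obtained by concatenating all the blocks `B 0, B 1, …`
(each block assumed nonempty). -/
def flattenBlocks (B : ℕ → List ℕ+) : ℕ → ℕ+ :=
  fun n => (blocksCat B (n + 1)).getD n 1

/-- Tuning substitution on a single digit: `a ↦ S₁ S₀^{a-1}`. -/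
def tuneDigit (r : ℝ) (a : ℕ+) : List ℕ+ :=
  oddExp r ++ (List.replicate ((a : ℕ) - 1) (evenExp r)).flatten

/-- Tuning substitution on finite strings:
`(a₁, …, aₙ) ↦ S₁ S₀^{a₁-1} S₁ S₀^{a₂-1} ⋯ S₁ S₀^{aₙ-1}`. -/
def tuneList (r : ℝ) (A : List ℕ+) : List ℕ+ := (A.map (tuneDigit r)).flatten

/-- The tuning map `τ_r : [0,1] → [0,r]`:  `τ_r(0) = ω(r)`,
`τ_r([0; a₁, a₂, …]) = [0; S₁ S₀^{a₁-1} S₁ S₀^{a₂-1} …]`, the same substitution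
being applied to a finite expansion when the argument is rational. -/
def tune (r : ℝ) (x : ℝ) : ℝ :=
  if x = 0 then omegaPt r
  else if ∃ q : ℚ, (q : ℝ) = x then cfVal (tuneList r (evenExp x))
  else cfValInf (flattenBlocks (fun k => tuneDigit r (cfDigit x k)))

/-- The matching index `⟦A⟧ = a₁ - a₂ + a₃ - ⋯` of a finite string. -/
def mIdx : List ℕ+ → ℤ
  | [] => 0
  | a :: l => (a : ℤ) - mIdx l

/-- The matching index of a rational number: `⟦r⟧ = ⟦S₀(r)⟧`. -/
def mIdxR (r : ℝ) : ℤ := mIdx (evenExp r)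

/-- `B(t) = {x ∈ [0,1] : G^k(x) ≥ t for all k}`. -/
def BSet (t : ℝ) : Set ℝ := {x ∈ Set.Icc (0 : ℝ) 1 | ∀ k : ℕ, gaussMap^[k] x ≥ t}

/-- The regular Cantor set `K(Σ)`: numbers whose continued fraction expansion is an
infinite concatenation of strings from `Σ`. -/
def KSet (SS : Set (List ℕ+)) : Set ℝ :=
  {x | ∃ B : ℕ → List ℕ+, (∀ n, B n ∈ SS) ∧ (∀ n, B n ≠ []) ∧
    x = cfValInf (flattenBlocks B)}

/-- The set of untuned parameters `UT = [0,g] \ ⋃_{r ∈ Q_E} W_r`. -/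
def UTset : Set ℝ := Set.Icc 0 gGolden \ ⋃ r ∈ QE, Wwin r

/-- The set `Q_UT` of untuned rationals. -/
def QUT : Set ℝ := {r ∈ QE | ¬ ∃ s ∈ QE, ∃ p ∈ QE, r = tune s p}

/-- The order `S << T` on finite strings of positive integers. -/
def strLL (S T : List ℕ+) : Prop :=
  ∃ k, k < S.length ∧ k < T.length ∧ (∀ i < k, S.getD i 1 = T.getD i 1) ∧
    (if k % 2 = 1 then S.getD k 1 < T.getD k 1 else T.getD k 1 < S.getD k 1)

/-- A finite string is dominant if it has even length and is `<<`-smaller than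
all of its proper suffixes. -/
def Dominant (S : List ℕ+) : Prop :=
  Even S.length ∧ ∀ A B : List ℕ+, A ≠ [] → B ≠ [] → S = A ++ B → strLL S B

/-- The α-continued fraction transformation `T_α`. -/
def Talpha (α : ℝ) (x : ℝ) : ℝ :=
  if x = 0 then 0 else 1 / |x| - ⌊1 / |x| + 1 - α⌋

end

lemma getD_of_prefix {S U : List ℕ+} (h : S <+: U) {i : ℕ} (hi : i < S.length) :
    U.getD i 1 = S.getD i 1 := by
  obtain ⟨t, rfl⟩ := h
  exact List.getD_append _ _ _ _ hi

lemma strLL_lift {P U V S X : List ℕ+} (hp : Even P.length)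
    (hS : S <+: U) (hX : X <+: V) (h : strLL S X) :
    strLL (P ++ U) (P ++ V) := by
  obtain ⟨k, hkS, hkX, hag, hcmp⟩ := h
  have hkU : k < U.length := lt_of_lt_of_le hkS hS.length_le
  have hkV : k < V.length := lt_of_lt_of_le hkX hX.length_le
  have eU : (P ++ U).getD (P.length + k) 1 = S.getD k 1 := by
    rw [List.getD_append_right _ _ _ _ (by omega)]
    simpa using getD_of_prefix hS hkS
  have eV : (P ++ V).getD (P.length + k) 1 = X.getD k 1 := by
    rw [List.getD_append_right _ _ _ _ (by omega)]
    simpa using getD_of_prefix hX hkX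
  refine ⟨P.length + k, by rw [List.length_append]; omega,
    by rw [List.length_append]; omega, ?_, ?_⟩
  · intro i hi
    by_cases hiP : i < P.length
    · rw [List.getD_append _ _ _ _ hiP, List.getD_append _ _ _ _ hiP]
    · push_neg at hiP
      rw [List.getD_append_right _ _ _ _ hiP, List.getD_append_right _ _ _ _ hiP]
      have hj : i - P.length < k := by omega
      rw [getD_of_prefix hS (by omega), getD_of_prefix hX (by omega)]
      exact hag _ hj
  · have hmod : (P.length + k) % 2 = k % 2 := by
      obtain ⟨c, hc⟩ := hp; omega
    rw [eU, eV, hmod]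
    exact hcmp


/-- If `S₀` is dominant and `B` is a nonempty proper suffix of `S₀` of
even length, then `S₀^m B` is dominant for every `m ≥ 1`. -/
theorem dominant_power_suffix (S₀ B C : List ℕ+) (hdom : Dominant S₀)
    (hC : C ≠ []) (hB : B ≠ []) (hsplit : S₀ = C ++ B) (hBeven : Even B.length) :
    ∀ m : ℕ, 1 ≤ m → Dominant ((List.replicate m S₀).flatten ++ B) := by
  intro m hm
  set L := S₀.length with hL
  have hLeven : Even L := hdom.1
  have hLpos : 0 < L := by
    rw [hL, hsplit, List.length_append]
    have : 0 < C.length := List.length_pos_iff.mpr hC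
    omega
  have hrep_len : ∀ n : ℕ, (List.replicate n S₀).flatten.length = n * L := by
    intro n
    simp [hL, List.length_flatten, List.map_replicate, List.sum_replicate, smul_eq_mul, mul_comm]
  have hrep_add : ∀ p q : ℕ, (List.replicate (p + q) S₀).flatten =
      (List.replicate p S₀).flatten ++ (List.replicate q S₀).flatten := by
    intro p q; rw [List.replicate_add, List.flatten_append]
  have hS0_prefix : ∀ n, 1 ≤ n → ∀ R : List ℕ+,
      S₀ <+: (List.replicate n S₀).flatten ++ R := by
    intro n hn R
    obtain ⟨n', rfl⟩ : ∃ n', n = 1 + n' := ⟨n - 1, by omega⟩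
    rw [hrep_add]
    exact ⟨(List.replicate n' S₀).flatten ++ R, by simp⟩
  constructor
  · rw [List.length_append, hrep_len]
    exact ((hLeven.mul_left m).add hBeven)
  · intro A D hA hD hsplit2
    set a := A.length with ha
    have hapos : 0 < a := List.length_pos_iff.mpr hA
    have hdrop : D = ((List.replicate m S₀).flatten ++ B).drop a := by
      rw [hsplit2, ha, List.drop_left]
    rcases Nat.lt_or_ge a (m * L) with hlt | hge
    · -- a < m * L
      obtain ⟨q, r, hrL, haqr, hqm⟩ : ∃ q r, r < L ∧ a = q * L + r ∧ q < m := by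
        refine ⟨a / L, a % L, Nat.mod_lt _ hLpos, (Nat.div_add_mod' a L).symm, ?_⟩
        exact (Nat.div_lt_iff_lt_mul hLpos).mpr hlt
      rcases Nat.eq_zero_or_pos r with hr0 | hrpos
      · -- a = q * L, q ≥ 1; D = S₀^{m-q} ++ B
        have hq1 : 1 ≤ q := by
          rcases Nat.eq_zero_or_pos q with h0 | h
          · subst h0; omega
          · exact h
        have hWsplit : (List.replicate m S₀).flatten ++ B =
            (List.replicate q S₀).flatten ++ ((List.replicate (m - q) S₀).flatten ++ B) := by
          conv_lhs => rw [show m = q + (m - q) by omega, hrep_add]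
          rw [List.append_assoc]
        have hD : D = (List.replicate (m - q) S₀).flatten ++ B := by
          rw [hdrop, hWsplit]
          have : a = (List.replicate q S₀).flatten.length := by rw [hrep_len]; omega
          rw [this, List.drop_left]
        have hWsplit2 : (List.replicate m S₀).flatten ++ B =
            (List.replicate (m - q) S₀).flatten ++ ((List.replicate q S₀).flatten ++ B) := by
          conv_lhs => rw [show m = (m - q) + q by omega, hrep_add]
          rw [List.append_assoc]
        rw [hWsplit2, hD]
        refine strLL_lift ?_ (hS0_prefix q hq1 B) (List.prefix_refl B)
          (hdom.2 C B hC hB hsplit)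
        rw [hrep_len]
        exact hLeven.mul_left _
      · -- r ≥ 1 : D starts with S₀.drop r
        have hDform : D = S₀.drop r ++ ((List.replicate (m - q - 1) S₀).flatten ++ B) := by
          have hWsplit : (List.replicate m S₀).flatten ++ B =
              (List.replicate q S₀).flatten ++
                (S₀ ++ ((List.replicate (m - q - 1) S₀).flatten ++ B)) := by
            have : m = q + (1 + (m - q - 1)) := by omega
            rw [this, hrep_add, hrep_add]
            simp [List.append_assoc]
          rw [hdrop, hWsplit]
          have h1 : a = (List.replicate q S₀).flatten.length + r := by rw [hrep_len]; omega
          rw [h1, ← List.drop_drop, List.drop_left,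
            List.drop_append_of_le_length (by omega)]
        have hstr : strLL S₀ (S₀.drop r) := by
          refine hdom.2 (S₀.take r) (S₀.drop r) ?_ ?_ (List.take_append_drop r S₀).symm
          · rw [← List.length_pos_iff, List.length_take]
            omega
          · rw [← List.length_pos_iff, List.length_drop]
            omega
        have := strLL_lift (P := []) (by simp)
          (hS0_prefix m hm B) (⟨(List.replicate (m - q - 1) S₀).flatten ++ B, hDform.symm⟩)
          hstr
        simpa using this
    · -- a ≥ m * L : D is a suffix of B
      set t := a - m * L with ht
      have hD2 : D = B.drop t := by
        rw [hdrop]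
        have h1 : a = (List.replicate m S₀).flatten.length + t := by rw [hrep_len]; omega
        rw [h1, ← List.drop_drop, List.drop_left]
      have htB : t < B.length := by
        by_contra h
        push_neg at h
        apply hD
        rw [hD2, List.drop_eq_nil_iff]
        omega
      have hDS : D = S₀.drop (C.length + t) := by
        rw [hsplit, ← List.drop_drop, List.drop_left, hD2]
      have hCB : L = C.length + B.length := by
        rw [hL, hsplit, List.length_append]
      have hstr : strLL S₀ D := by
        rw [hDS]
        refine hdom.2 (S₀.take (C.length + t)) (S₀.drop (C.length + t)) ?_ ?_
          (List.take_append_drop _ S₀).symm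
        · rw [← List.length_pos_iff, List.length_take]
          have : 0 < C.length := List.length_pos_iff.mpr hC
          omega
        · rw [← List.length_pos_iff, List.length_drop]
          omega
      have := strLL_lift (P := []) (by simp) (hS0_prefix m hm B)
        (List.prefix_refl D) hstr
      simpa using this
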